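/- arXiv:1912.01411 — 3 statements merged into one kernel-verified Lean document; each statement's English description precedes it below -/
import Mathlib

section
/- The semi-tensor product of matrices is associative: for any real matrices A, B, C, one has (A ⋉ B) ⋉ C = A ⋉ (B ⋉ C). -/
open Matrix Kronecker

/-- The semi-tensor product `A ⋉ B = (A ⊗ I_{l/m})(B ⊗ I_{l/p})`, `l = lcm(m,p)`. -/
def stp {n m p q : ℕ} (A : Matrix (Fin n) (Fin m) ℝ) (B : Matrix (Fin p) (Fin q) ℝ) :
    Matrix (Fin (n * (Nat.lcm m p / m))) (Fin (q * (Nat.lcm m p / p))) ℝ :=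
  (Matrix.reindex finProdFinEquiv finProdFinEquiv
      (A ⊗ₖ (1 : Matrix (Fin (Nat.lcm m p / m)) (Fin (Nat.lcm m p / m)) ℝ))) *
  (Matrix.reindex (finProdFinEquiv.trans (finCongr (by
        rw [Nat.mul_div_cancel' (Nat.dvd_lcm_right m p),
          Nat.mul_div_cancel' (Nat.dvd_lcm_left m p)])))
      finProdFinEquiv
      (B ⊗ₖ (1 : Matrix (Fin (Nat.lcm m p / p)) (Fin (Nat.lcm m p / p)) ℝ)))

/-! ### Auxiliary machinery -/

/-- Cast a matrix along equalities of its dimensions. -/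
def mcast {a b a' b' : ℕ} (h1 : a = a') (h2 : b = b') (M : Matrix (Fin a) (Fin b) ℝ) :
    Matrix (Fin a') (Fin b') ℝ :=
  M.submatrix (Fin.cast h1.symm) (Fin.cast h2.symm)

/-- `M ⊗ I_k`, with `Fin` index types. -/
def kext {a b : ℕ} (k : ℕ) (M : Matrix (Fin a) (Fin b) ℝ) :
    Matrix (Fin (a*k)) (Fin (b*k)) ℝ :=
  Matrix.reindex finProdFinEquiv finProdFinEquiv (M ⊗ₖ (1 : Matrix (Fin k) (Fin k) ℝ))

lemma kext_apply {a b : ℕ} (k : ℕ) (M : Matrix (Fin a) (Fin b) ℝ) (i : Fin (a*k))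
    (j : Fin (b*k)) :
    kext k M i j = if i.modNat = j.modNat then M i.divNat j.divNat else 0 := by
  simp [kext, Matrix.one_apply, mul_ite, mul_one, mul_zero]

lemma mcast_mcast {a b a' b' a'' b'' : ℕ} (h1 : a = a') (h2 : b = b') (h3 : a' = a'')
    (h4 : b' = b'') (M : Matrix (Fin a) (Fin b) ℝ) :
    mcast h3 h4 (mcast h1 h2 M) = mcast (h1.trans h3) (h2.trans h4) M := rfl

lemma mcast_mul {a b a' b' c c' x : ℕ} (h1 : a = a') (h2 : b = x) (h3 : c = x) (h4 : b' = c')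
    (M : Matrix (Fin a) (Fin b) ℝ) (N : Matrix (Fin c) (Fin b') ℝ) :
    (mcast h1 h2 M) * (mcast h3 h4 N) = mcast h1 h4 (M * mcast (h3.trans h2.symm) rfl N) := by
  subst h1 h2 h3 h4
  rfl

lemma mcast_mul_left {a a' b c : ℕ} (h : a = a') (N : Matrix (Fin a) (Fin b) ℝ)
    (Z : Matrix (Fin b) (Fin c) ℝ) :
    mcast h rfl (N * Z) = mcast h rfl N * Z := by subst h; rfl

lemma kext_mul {a b c : ℕ} (k : ℕ) (M : Matrix (Fin a) (Fin b) ℝ)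
    (N : Matrix (Fin b) (Fin c) ℝ) :
    kext k (M * N) = kext k M * kext k N := by
  unfold kext
  rw [show ((1 : Matrix (Fin k) (Fin k) ℝ)) = 1 * 1 by rw [one_mul],
    Matrix.mul_kronecker_mul]
  simp only [Matrix.reindex_apply]
  rw [Matrix.submatrix_mul_equiv]
  simp

lemma kext_mcast {a b a' b' : ℕ} (k : ℕ) (h1 : a = a') (h2 : b = b')
    (M : Matrix (Fin a) (Fin b) ℝ) :
    kext k (mcast h1 h2 M) = mcast (by rw [h1]) (by rw [h2]) (kext k M) := by
  subst h1; subst h2; rfl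

lemma kext_congr {a b : ℕ} {k k' : ℕ} (hk : k = k') (M : Matrix (Fin a) (Fin b) ℝ) :
    kext k' M = mcast (by rw [hk]) (by rw [hk]) (kext k M) := by
  subst hk; rfl

lemma nat_mod_mul (a k u : ℕ) : a % (k*u) = k * (a / k % u) + a % k := by
  conv_lhs => rw [← Nat.div_add_mod (a % (k*u)) k]
  rw [Nat.mod_mul_right_div_self, Nat.mod_mod_of_dvd _ ⟨u, rfl⟩, mul_comm]

lemma mod_mul_iff {i j k u : ℕ} :
    i % (u*k) = j % (u*k) ↔ (i % k = j % k ∧ i / k % u = j / k % u) := by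
  rw [mul_comm u k]
  constructor
  · intro h
    have h1 := congrArg (· % k) h
    have h2 := congrArg (· / k) h
    simp only [Nat.mod_mod_of_dvd _ ⟨u, rfl⟩, Nat.mod_mul_right_div_self] at h1 h2
    exact ⟨h1, h2⟩
  · rintro ⟨h1, h2⟩
    rw [nat_mod_mul i k u, nat_mod_mul j k u, h1, h2]

lemma kext_kext {a b : ℕ} (k u : ℕ) (M : Matrix (Fin a) (Fin b) ℝ) :
    kext k (kext u M) = mcast (mul_assoc a u k).symm (mul_assoc b u k).symm (kext (u*k) M) := by
  ext i j
  show _ = (kext (u*k) M) (Fin.cast (mul_assoc a u k) i) (Fin.cast (mul_assoc b u k) j)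
  simp only [kext_apply, Fin.ext_iff, Fin.coe_divNat, Fin.coe_modNat, Fin.coe_cast]
  by_cases h : (i:ℕ) % (u*k) = (j:ℕ) % (u*k)
  · obtain ⟨h1, h2⟩ := mod_mul_iff.mp h
    rw [if_pos h1, if_pos h2, if_pos h]
    congr 1 <;> apply Fin.ext <;>
      simp [Fin.coe_divNat, Fin.coe_cast, Nat.div_div_eq_div_mul, mul_comm k u]
  · rw [if_neg h]
    rcases Decidable.em ((i:ℕ) % k = (j:ℕ) % k) with h1 | h1
    · rcases Decidable.em ((i:ℕ)/k % u = (j:ℕ)/k % u) with h2 | h2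
      · exact absurd (mod_mul_iff.mpr ⟨h1, h2⟩) h
      · rw [if_pos h1, if_neg h2]
    · rw [if_neg h1]

lemma stp_eq {n m p q : ℕ} (A : Matrix (Fin n) (Fin m) ℝ) (B : Matrix (Fin p) (Fin q) ℝ) :
    stp A B = @HMul.hMul _ _ _ Matrix.instHMulOfFintypeOfMulOfAddCommMonoid
      (kext (Nat.lcm m p / m) A)
      (mcast (by rw [Nat.mul_div_cancel' (Nat.dvd_lcm_right m p),
          Nat.mul_div_cancel' (Nat.dvd_lcm_left m p)]) rfl
        (kext (Nat.lcm m p / p) B)) := rfl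

/-! ### Arithmetic lemmas -/

lemma keyF1 (m p q s : ℕ) :
    q * Nat.lcm m (p * (Nat.lcm q s / q)) = p * Nat.lcm (q * (Nat.lcm m p / p)) s := by
  have hγ : q * (Nat.lcm q s / q) = Nat.lcm q s := Nat.mul_div_cancel' (Nat.dvd_lcm_left q s)
  have hβ : p * (Nat.lcm m p / p) = Nat.lcm m p := Nat.mul_div_cancel' (Nat.dvd_lcm_right m p)
  calc q * Nat.lcm m (p * (Nat.lcm q s / q))
      = Nat.lcm (q * m) (q * (p * (Nat.lcm q s / q))) := (Nat.lcm_mul_left ..).symm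
    _ = Nat.lcm (q * m) (p * Nat.lcm q s) := by rw [mul_left_comm, hγ]
    _ = Nat.lcm (q * m) (Nat.lcm (p * q) (p * s)) := by rw [Nat.lcm_mul_left]
    _ = Nat.lcm (Nat.lcm (q * m) (q * p)) (p * s) := by
        rw [← Nat.lcm_assoc, mul_comm p q]
    _ = Nat.lcm (q * Nat.lcm m p) (p * s) := by rw [Nat.lcm_mul_left]
    _ = Nat.lcm (p * (q * (Nat.lcm m p / p))) (p * s) := by rw [mul_left_comm, hβ]
    _ = p * Nat.lcm (q * (Nat.lcm m p / p)) s := by rw [Nat.lcm_mul_left]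

lemma keyF2 (m p q s : ℕ) :
    (Nat.lcm m p / m) * (Nat.lcm (q * (Nat.lcm m p / p)) s / (q * (Nat.lcm m p / p)))
      = Nat.lcm m (p * (Nat.lcm q s / q)) / m := by
  rcases Nat.eq_zero_or_pos m with hm | hm
  · subst hm; simp
  rcases Nat.eq_zero_or_pos q with hq | hq
  · subst hq; simp
  have hα : m * (Nat.lcm m p / m) = Nat.lcm m p := Nat.mul_div_cancel' (Nat.dvd_lcm_left m p)
  have hβ : p * (Nat.lcm m p / p) = Nat.lcm m p := Nat.mul_div_cancel' (Nat.dvd_lcm_right m p)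
  have he : (q * (Nat.lcm m p / p)) * (Nat.lcm (q * (Nat.lcm m p / p)) s / (q * (Nat.lcm m p / p)))
      = Nat.lcm (q * (Nat.lcm m p / p)) s := Nat.mul_div_cancel' (Nat.dvd_lcm_left _ _)
  have hμ : m * (Nat.lcm m (p * (Nat.lcm q s / q)) / m)
      = Nat.lcm m (p * (Nat.lcm q s / q)) := Nat.mul_div_cancel' (Nat.dvd_lcm_left _ _)
  apply Nat.eq_of_mul_eq_mul_left (show 0 < q * m from Nat.mul_pos hq hm)
  calc q * m * ((Nat.lcm m p / m) * (Nat.lcm (q * (Nat.lcm m p / p)) s / (q * (Nat.lcm m p / p))))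
      = q * ((m * (Nat.lcm m p / m)) * (Nat.lcm (q * (Nat.lcm m p / p)) s / (q * (Nat.lcm m p / p)))) := by ring
    _ = q * (Nat.lcm m p * (Nat.lcm (q * (Nat.lcm m p / p)) s / (q * (Nat.lcm m p / p)))) := by rw [hα]
    _ = q * ((p * (Nat.lcm m p / p)) * (Nat.lcm (q * (Nat.lcm m p / p)) s / (q * (Nat.lcm m p / p)))) := by rw [hβ]
    _ = p * ((q * (Nat.lcm m p / p)) * (Nat.lcm (q * (Nat.lcm m p / p)) s / (q * (Nat.lcm m p / p)))) := by ring
    _ = p * Nat.lcm (q * (Nat.lcm m p / p)) s := by rw [he]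
    _ = q * Nat.lcm m (p * (Nat.lcm q s / q)) := (keyF1 m p q s).symm
    _ = q * (m * (Nat.lcm m (p * (Nat.lcm q s / q)) / m)) := by rw [hμ]
    _ = q * m * (Nat.lcm m (p * (Nat.lcm q s / q)) / m) := by ring

lemma keyF3 (m p q s : ℕ) :
    (Nat.lcm m p / p) * (Nat.lcm (q * (Nat.lcm m p / p)) s / (q * (Nat.lcm m p / p)))
      = (Nat.lcm q s / q) * (Nat.lcm m (p * (Nat.lcm q s / q)) / (p * (Nat.lcm q s / q))) := by
  rcases Nat.eq_zero_or_pos p with hp | hp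
  · subst hp; simp
  rcases Nat.eq_zero_or_pos q with hq | hq
  · subst hq; simp
  have he : (q * (Nat.lcm m p / p)) * (Nat.lcm (q * (Nat.lcm m p / p)) s / (q * (Nat.lcm m p / p)))
      = Nat.lcm (q * (Nat.lcm m p / p)) s := Nat.mul_div_cancel' (Nat.dvd_lcm_left _ _)
  have hν : (p * (Nat.lcm q s / q)) * (Nat.lcm m (p * (Nat.lcm q s / q)) / (p * (Nat.lcm q s / q)))
      = Nat.lcm m (p * (Nat.lcm q s / q)) := Nat.mul_div_cancel' (Nat.dvd_lcm_right _ _)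
  apply Nat.eq_of_mul_eq_mul_left (show 0 < p * q from Nat.mul_pos hp hq)
  calc p * q * ((Nat.lcm m p / p) * (Nat.lcm (q * (Nat.lcm m p / p)) s / (q * (Nat.lcm m p / p))))
      = p * ((q * (Nat.lcm m p / p)) * (Nat.lcm (q * (Nat.lcm m p / p)) s / (q * (Nat.lcm m p / p)))) := by ring
    _ = p * Nat.lcm (q * (Nat.lcm m p / p)) s := by rw [he]
    _ = q * Nat.lcm m (p * (Nat.lcm q s / q)) := (keyF1 m p q s).symm
    _ = q * ((p * (Nat.lcm q s / q)) * (Nat.lcm m (p * (Nat.lcm q s / q)) / (p * (Nat.lcm q s / q)))) := by rw [hν]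
    _ = p * q * ((Nat.lcm q s / q) * (Nat.lcm m (p * (Nat.lcm q s / q)) / (p * (Nat.lcm q s / q)))) := by ring

lemma keyF4 (m p q s : ℕ) :
    Nat.lcm (q * (Nat.lcm m p / p)) s / s
      = (Nat.lcm q s / s) * (Nat.lcm m (p * (Nat.lcm q s / q)) / (p * (Nat.lcm q s / q))) := by
  rcases Nat.eq_zero_or_pos p with hp | hp
  · subst hp; simp
  rcases Nat.eq_zero_or_pos s with hs | hs
  · subst hs; simp
  have hf : s * (Nat.lcm (q * (Nat.lcm m p / p)) s / s)
      = Nat.lcm (q * (Nat.lcm m p / p)) s := Nat.mul_div_cancel' (Nat.dvd_lcm_right _ _)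
  have hδ : s * (Nat.lcm q s / s) = Nat.lcm q s := Nat.mul_div_cancel' (Nat.dvd_lcm_right q s)
  have hγ : q * (Nat.lcm q s / q) = Nat.lcm q s := Nat.mul_div_cancel' (Nat.dvd_lcm_left q s)
  have hν : (p * (Nat.lcm q s / q)) * (Nat.lcm m (p * (Nat.lcm q s / q)) / (p * (Nat.lcm q s / q)))
      = Nat.lcm m (p * (Nat.lcm q s / q)) := Nat.mul_div_cancel' (Nat.dvd_lcm_right _ _)
  apply Nat.eq_of_mul_eq_mul_left (show 0 < p * s from Nat.mul_pos hp hs)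
  calc p * s * (Nat.lcm (q * (Nat.lcm m p / p)) s / s)
      = p * (s * (Nat.lcm (q * (Nat.lcm m p / p)) s / s)) := by ring
    _ = p * Nat.lcm (q * (Nat.lcm m p / p)) s := by rw [hf]
    _ = q * Nat.lcm m (p * (Nat.lcm q s / q)) := (keyF1 m p q s).symm
    _ = q * ((p * (Nat.lcm q s / q)) * (Nat.lcm m (p * (Nat.lcm q s / q)) / (p * (Nat.lcm q s / q)))) := by rw [hν]
    _ = p * ((q * (Nat.lcm q s / q)) * (Nat.lcm m (p * (Nat.lcm q s / q)) / (p * (Nat.lcm q s / q)))) := by ring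
    _ = p * (Nat.lcm q s * (Nat.lcm m (p * (Nat.lcm q s / q)) / (p * (Nat.lcm q s / q)))) := by rw [hγ]
    _ = p * ((s * (Nat.lcm q s / s)) * (Nat.lcm m (p * (Nat.lcm q s / q)) / (p * (Nat.lcm q s / q)))) := by rw [hδ]
    _ = p * s * ((Nat.lcm q s / s) * (Nat.lcm m (p * (Nat.lcm q s / q)) / (p * (Nat.lcm q s / q)))) := by ring

/-- The semi-tensor product is associative: `(A ⋉ B) ⋉ C = A ⋉ (B ⋉ C)`
(the two sides have equal dimensions, and agree up to the corresponding cast). -/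
theorem stp_assoc {n m p q s t : ℕ}
    (A : Matrix (Fin n) (Fin m) ℝ) (B : Matrix (Fin p) (Fin q) ℝ)
    (C : Matrix (Fin s) (Fin t) ℝ) :
    ∃ (hr : _ = _) (hc : _ = _),
      stp (stp A B) C = (stp A (stp B C)).reindex (finCongr hr) (finCongr hc) := by
  have hr : n * (Nat.lcm m (p * (Nat.lcm q s / q)) / m)
      = n * (Nat.lcm m p / m) * (Nat.lcm (q * (Nat.lcm m p / p)) s / (q * (Nat.lcm m p / p))) := by
    rw [← keyF2 m p q s, ← mul_assoc]
  have hc : t * (Nat.lcm q s / s) * (Nat.lcm m (p * (Nat.lcm q s / q)) / (p * (Nat.lcm q s / q)))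
      = t * (Nat.lcm (q * (Nat.lcm m p / p)) s / s) := by
    rw [keyF4 m p q s, mul_assoc]
  refine ⟨hr, hc, ?_⟩
  show stp (stp A B) C = mcast hr hc (stp A (stp B C))
  rw [stp_eq (stp A B) C, stp_eq A B, stp_eq A (stp B C), stp_eq B C]
  simp only [kext_mul, kext_mcast, kext_kext, mcast_mcast]
  rw [kext_congr (keyF2 m p q s) A, kext_congr (keyF3 m p q s) B,
    kext_congr (keyF4 m p q s) C]
  simp only [mcast_mcast, mcast_mul]
  simp only [mcast_mul_left]
  rw [Matrix.mul_assoc]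
end

section
/- If the interaction digraph of a Boolean network on n nodes is acyclic, then the network converges in at most n steps: F^n is constant, where F is the global update map. -/
/-- `f` depends (essentially) on variable `i`. -/
def BoolDependsOn {n : ℕ} (f : (Fin n → Bool) → Bool) (i : Fin n) : Prop :=
  ∃ x y : Fin n → Bool, (∀ j : Fin n, j ≠ i → x j = y j) ∧ f x ≠ f y

/-- If `x` and `y` agree on all essential variables of `f`, then `f x = f y`. -/
lemma aux_agree_on {n : ℕ} (f : (Fin n → Bool) → Bool) :
    ∀ (s : Finset (Fin n)) (x y : Fin n → Bool),
      (∀ i, x i ≠ y i → i ∈ s) → (∀ i, BoolDependsOn f i → x i = y i) → f x = f y := by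
  classical
  intro s
  induction s using Finset.induction_on with
  | empty =>
    intro x y hs _
    have : x = y := funext fun i => by
      by_contra hne; exact absurd (hs i hne) (Finset.notMem_empty i)
    rw [this]
  | @insert a s ha ih =>
    intro x y hs hdep
    by_cases hxa : x a = y a
    · refine ih x y (fun i hi => ?_) hdep
      have := hs i hi
      rcases Finset.mem_insert.mp this with h | h
      · exact absurd (h ▸ hxa) hi
      · exact h
    · have hnd : ¬ BoolDependsOn f a := fun h => hxa (hdep a h)
      set y' := Function.update y a (x a) with hy'
      have h1 : f y' = f y := by
        by_contra hne
        exact hnd ⟨y', y, fun j hj => Function.update_of_ne hj _ _, hne⟩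
      have h2 : f x = f y' := by
        refine ih x y' (fun i hi => ?_) (fun i hdi => ?_)
        · have hia : i ≠ a := by
            intro h; subst h
            apply hi; rw [hy', Function.update_self]
          have : y' i = y i := Function.update_of_ne hia _ _
          rcases Finset.mem_insert.mp (hs i (this ▸ hi)) with h | h
          · exact absurd h hia
          · exact h
        · have hia : i ≠ a := fun h => hnd (h ▸ hdi)
          rw [hy', Function.update_of_ne hia]
          exact hdep i hdi
      rw [h2, h1]

/-- If the interaction digraph of a Boolean network on `n` nodes is acyclic (no
directed cycles, no self-loops), then the network converges in at most `n` steps: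
`F^[n]` is constant. -/
theorem acyclic_converges_in_n_steps {n : ℕ} (F : (Fin n → Bool) → (Fin n → Bool))
    (hacyc : ∀ v : Fin n,
      ¬ Relation.TransGen (fun i j : Fin n => BoolDependsOn (fun x => F x j) i) v v) :
    ∃ c : Fin n → Bool, ∀ x : Fin n → Bool, F^[n] x = c := by
  classical
  set R := fun i j : Fin n => BoolDependsOn (fun x => F x j) i with hR
  set h : Fin n → ℕ :=
    fun j => (Finset.univ.filter (fun i => Relation.TransGen R i j)).card with hh
  have hstep : ∀ i j : Fin n, R i j → h i < h j := by
    intro i j hij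
    apply Finset.card_lt_card
    constructor
    · intro k hk
      simp only [Finset.mem_filter, Finset.mem_univ, true_and] at hk ⊢
      exact hk.trans (Relation.TransGen.single hij)
    · intro hsub
      have hi : i ∈ Finset.univ.filter (fun k => Relation.TransGen R k j) := by
        simp only [Finset.mem_filter, Finset.mem_univ, true_and]
        exact Relation.TransGen.single hij
      have := hsub hi
      simp only [Finset.mem_filter, Finset.mem_univ, true_and] at this
      exact hacyc i this
  have hlt : ∀ j : Fin n, h j < n := by
    intro j
    have : (Finset.univ.filter (fun i => Relation.TransGen R i j)) ⊂ Finset.univ := by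
      refine Finset.ssubset_univ_iff.mpr ?_
      intro hEq
      have : j ∈ Finset.univ.filter (fun i => Relation.TransGen R i j) := by
        rw [hEq]; exact Finset.mem_univ j
      simp only [Finset.mem_filter, Finset.mem_univ, true_and] at this
      exact hacyc j this
    simpa using Finset.card_lt_card this
  have main : ∀ t : ℕ, ∀ j : Fin n, h j < t → ∀ x y : Fin n → Bool,
      F^[t] x j = F^[t] y j := by
    intro t
    induction t with
    | zero => intro j hj; omega
    | succ t ih =>
      intro j hj x y
      rw [Function.iterate_succ_apply', Function.iterate_succ_apply']
      refine aux_agree_on (fun z => F z j) Finset.univ _ _ (fun _ _ => Finset.mem_univ _)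
        (fun i hdi => ?_)
      exact ih i (by have := hstep i j hdi; omega) x y
  refine ⟨F^[n] (fun _ => false), fun x => funext fun j => ?_⟩
  exact main n j (hlt j) x (fun _ => false)
end

section
/- If a map F : {0,1}^n → {0,1}^n has an acyclic interaction digraph, then F has exactly one fixed point x*, and x* can be computed coordinate-wise along a topological order of the digraph: for a source node i (no in-edges), f_i is constant and x*_i equals that constant; for each subsequent node j, x*_j = f_j(values of x* at in-neighbors of j). -/
lemma not_dependsOn_update {n : ℕ} (f : (Fin n → Bool) → Bool) (i : Fin n)
    (h : ¬ BoolDependsOn f i) (x : Fin n → Bool) (b : Bool) :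
    f (Function.update x i b) = f x := by
  by_contra hne
  exact h ⟨Function.update x i b, x, fun j hj => Function.update_of_ne hj _ _, hne⟩

lemma eq_of_agree {n : ℕ} (f : (Fin n → Bool) → Bool) (y z : Fin n → Bool)
    (h : ∀ i, BoolDependsOn f i → y i = z i) : f y = f z := by
  have key : ∀ s : Finset (Fin n), ∀ y : Fin n → Bool,
      (∀ i, BoolDependsOn f i → y i = z i) → (∀ i, i ∉ s → y i = z i) → f y = f z := by
    intro s
    induction s using Finset.induction with
    | empty =>
      intro y _ hout
      have : y = z := funext fun i => hout i (by simp)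
      rw [this]
    | @insert a s ha ih =>
      intro y hdep hout
      have step : f y = f (Function.update y a (z a)) := by
        by_cases hda : BoolDependsOn f a
        · rw [← hdep a hda, Function.update_eq_self]
        · rw [not_dependsOn_update f a hda]
      rw [step]
      apply ih
      · intro i hi
        by_cases hia : i = a
        · subst hia; simp
        · rw [Function.update_of_ne hia]; exact hdep i hi
      · intro i hi
        by_cases hia : i = a
        · subst hia; simp
        · rw [Function.update_of_ne hia]
          exact hout i (by simp [hia, hi])
  exact key Finset.univ y h (fun i hi => absurd (Finset.mem_univ i) hi)

/-- If `F : {0,1}ⁿ → {0,1}ⁿ` has an acyclic interaction digraph, then `F` has exactly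
one fixed point `x*`, computable coordinate-wise along a topological order: the
coordinate function of a source node is constant, and `x*_j = f_j` evaluated at any
state agreeing with `x*` on the in-neighbors of `j`. -/
theorem acyclic_unique_fixed_point {n : ℕ} (F : (Fin n → Bool) → (Fin n → Bool))
    (hacyc : ∀ v : Fin n,
      ¬ Relation.TransGen (fun i j : Fin n => BoolDependsOn (fun x => F x j) i) v v) :
    (∃! xs : Fin n → Bool, F xs = xs) ∧
    (∀ j : Fin n, (∀ i : Fin n, ¬ BoolDependsOn (fun x => F x j) i) →
      ∀ y z : Fin n → Bool, F y j = F z j) ∧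
    (∀ xs : Fin n → Bool, F xs = xs → ∀ (j : Fin n) (y : Fin n → Bool),
      (∀ i : Fin n, BoolDependsOn (fun x => F x j) i → y i = xs i) → F y j = xs j) := by
  classical
  set r : Fin n → Fin n → Prop := fun i j => BoolDependsOn (fun x => F x j) i with hr
  haveI : IsIrrefl (Fin n) (Relation.TransGen r) := ⟨hacyc⟩
  haveI : IsTrans (Fin n) (Relation.TransGen r) := ⟨fun _ _ _ => Relation.TransGen.trans⟩
  have hwf : WellFounded (Relation.TransGen r) :=
    Finite.wellFounded_of_trans_of_irrefl _
  -- construct the fixed point by well-founded recursion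
  let g : Fin n → Bool := hwf.fix
    (fun j rec => F (fun i => if h : Relation.TransGen r i j then rec i h else false) j)
  have hg : ∀ j, g j = F (fun i => if Relation.TransGen r i j then g i else false) j := by
    intro j
    exact hwf.fix_eq _ j
  have hgfix : F g = g := by
    funext j
    rw [hg j]
    exact eq_of_agree (fun x => F x j) g _ fun i hi => by
      have : Relation.TransGen r i j := Relation.TransGen.single (by exact hi)
      simp [this]
  refine ⟨⟨g, hgfix, ?_⟩, ?_, ?_⟩
  · -- uniqueness
    intro xs hxs
    funext j
    induction j using hwf.induction with
    | _ j ih =>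
      have h1 : xs j = F xs j := by rw [hxs]
      have h2 : g j = F g j := by rw [hgfix]
      rw [h1, h2]
      exact eq_of_agree _ xs g fun i hi => ih i (Relation.TransGen.single hi)
  · intro j hj y z
    exact eq_of_agree _ y z fun i hi => absurd hi (hj i)
  · intro xs hxs j y hy
    have : F y j = F xs j := eq_of_agree _ y xs hy
    rw [this, hxs]
end
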